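/- Let p ≥ 3 be an integer and let Δ = {r ∈ S³ : ⟨u_k, r⟩ > 0 for all k ∈ {1,…,p−1}}. Then the closure of Δ in the subspace topology of S³ equals {r ∈ S³ : ⟨u_k, r⟩ ≥ 0 for all k ∈ {1,…,p−1}}, and the frontier (boundary) of Δ in S³ equals {r ∈ S³ : ⟨u_k, r⟩ ≥ 0 for all k ∈ {1,…,p−1}, and ⟨u_k, r⟩ = 0 for at least one k ∈ {1,…,p−1}}. -/

import Mathlib

open scoped RealInnerProductSpace

/-- The vector `u_k = (1 - cos(2πk/p), -sin(2πk/p), 0, 0) ∈ ℝ⁴`. -/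
noncomputable def uvec (p k : ℕ) : EuclideanSpace ℝ (Fin 4) :=
  !₂[1 - Real.cos (2 * Real.pi * (k : ℝ) / (p : ℝ)),
    -Real.sin (2 * Real.pi * (k : ℝ) / (p : ℝ)), 0, 0]

/-- The unit sphere `S³ ⊆ ℝ⁴` as a topological space. -/
abbrev Sph3 : Type := Metric.sphere (0 : EuclideanSpace ℝ (Fin 4)) 1

/-- The normal fundamental domain `Δ = {r ∈ S³ | ⟪u_k, r⟫ > 0 for k = 1, …, p-1}`,
as a subset of the sphere `S³` with its subspace topology. -/
noncomputable def Delta (p : ℕ) : Set Sph3 :=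
  {r | ∀ k : ℕ, 1 ≤ k → k ≤ p - 1 → 0 < ⟪uvec p k, (r : EuclideanSpace ℝ (Fin 4))⟫}

/-- The base point `q₀ = (1,0,0,0)`. -/
noncomputable def q0v : EuclideanSpace ℝ (Fin 4) := EuclideanSpace.single 0 1

lemma inner_uvec_q0 (p k : ℕ) :
    ⟪uvec p k, q0v⟫ = 1 - Real.cos (2*Real.pi*(k:ℝ)/(p:ℝ)) := by
  simp [uvec, q0v, PiLp.inner_apply, Fin.sum_univ_four, RCLike.inner_apply,
    EuclideanSpace.single_apply]

lemma cos_lt_one_aux (p k : ℕ) (hp : 3 ≤ p) (h1 : 1 ≤ k) (h2 : k ≤ p - 1) :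
    Real.cos (2*Real.pi*(k:ℝ)/(p:ℝ)) < 1 := by
  have hp0 : (0:ℝ) < p := by positivity
  have hk0 : (0:ℝ) < k := by exact_mod_cast h1
  have hkp : (k:ℝ) < p := by
    have : k < p := by omega
    exact_mod_cast this
  have hx0 : 0 < 2*Real.pi*(k:ℝ)/(p:ℝ) := by positivity
  have hx2 : 2*Real.pi*(k:ℝ)/(p:ℝ) < 2*Real.pi := by
    rw [div_lt_iff₀ hp0]
    have := Real.pi_pos
    nlinarith
  refine lt_of_le_of_ne (Real.cos_le_one _) ?_
  intro h
  have := (Real.cos_eq_one_iff_of_lt_of_lt (by linarith [Real.pi_pos]) hx2).mp h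
  linarith

lemma cont_inner (p k : ℕ) :
    Continuous fun r : Sph3 => ⟪uvec p k, (r : EuclideanSpace ℝ (Fin 4))⟫ :=
  Continuous.inner continuous_const continuous_subtype_val

lemma isOpen_Delta (p : ℕ) : IsOpen (Delta p) := by
  have : Delta p = ⋂ k ∈ Finset.Icc 1 (p-1),
      {r : Sph3 | 0 < ⟪uvec p k, (r : EuclideanSpace ℝ (Fin 4))⟫} := by
    ext r
    simp [Delta, Finset.mem_Icc]
  rw [this]
  exact isOpen_biInter_finset fun k _ => isOpen_lt continuous_const (cont_inner p k)

lemma isClosed_S (p : ℕ) : IsClosed {r : Sph3 | ∀ k : ℕ, 1 ≤ k → k ≤ p - 1 →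
    0 ≤ ⟪uvec p k, (r : EuclideanSpace ℝ (Fin 4))⟫} := by
  have : {r : Sph3 | ∀ k : ℕ, 1 ≤ k → k ≤ p - 1 →
      0 ≤ ⟪uvec p k, (r : EuclideanSpace ℝ (Fin 4))⟫}
    = ⋂ k, ⋂ (_ : 1 ≤ k), ⋂ (_ : k ≤ p - 1),
      {r : Sph3 | 0 ≤ ⟪uvec p k, (r : EuclideanSpace ℝ (Fin 4))⟫} := by
    ext r; simp [Set.mem_iInter]
  rw [this]
  exact isClosed_iInter fun k => isClosed_iInter fun _ => isClosed_iInter fun _ =>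
    isClosed_le continuous_const (cont_inner p k)

lemma mem_closure_Delta (p : ℕ) (hp : 3 ≤ p) (r : Sph3)
    (hr : ∀ k : ℕ, 1 ≤ k → k ≤ p - 1 → 0 ≤ ⟪uvec p k, (r : EuclideanSpace ℝ (Fin 4))⟫) :
    r ∈ closure (Delta p) := by
  set E := EuclideanSpace ℝ (Fin 4)
  set t : ℕ → ℝ := fun n => 1/((n:ℝ)+2) with ht_def
  have ht_pos : ∀ n, 0 < t n := fun n => by positivity
  have ht_lt : ∀ n, t n < 1 := fun n => by
    rw [ht_def]
    rw [div_lt_one (by positivity)]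
    have : (0:ℝ) ≤ n := Nat.cast_nonneg n
    linarith
  set g : ℕ → E := fun n => (1 - t n) • (r : E) + t n • q0v with hg_def
  have hinner : ∀ n, ∀ k : ℕ, 1 ≤ k → k ≤ p - 1 → 0 < ⟪uvec p k, g n⟫ := by
    intro n k h1 h2
    have : ⟪uvec p k, g n⟫ = (1 - t n) * ⟪uvec p k, (r:E)⟫ + t n * ⟪uvec p k, q0v⟫ := by
      show ⟪uvec p k, (1 - t n) • (r:E) + t n • q0v⟫ = _
      rw [inner_add_right, real_inner_smul_right, real_inner_smul_right]
    rw [this, inner_uvec_q0]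
    have h3 := cos_lt_one_aux p k hp h1 h2
    have h4 := hr k h1 h2
    have := ht_pos n; have := ht_lt n
    nlinarith
  have hgne : ∀ n, g n ≠ 0 := by
    intro n h
    have := hinner n 1 le_rfl (by omega)
    rw [h, inner_zero_right] at this
    exact lt_irrefl _ this
  set f : ℕ → E := fun n => ‖g n‖⁻¹ • g n with hf_def
  have hfnorm : ∀ n, ‖f n‖ = 1 := by
    intro n
    rw [hf_def]
    simp [norm_smul, inv_mul_cancel₀ (norm_ne_zero_iff.mpr (hgne n))]
    rw [abs_of_nonneg (norm_nonneg _)]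
    exact inv_mul_cancel₀ (norm_ne_zero_iff.mpr (hgne n))
  set seq : ℕ → Sph3 := fun n => ⟨f n, by simp [hfnorm n]⟩ with hseq_def
  have hmem : ∀ n, seq n ∈ Delta p := by
    intro n k h1 h2
    have : ⟪uvec p k, (seq n : E)⟫ = ‖g n‖⁻¹ * ⟪uvec p k, g n⟫ := by
      show ⟪uvec p k, ‖g n‖⁻¹ • g n⟫ = _
      rw [real_inner_smul_right]
    rw [this]
    exact mul_pos (inv_pos.mpr (norm_pos_iff.mpr (hgne n))) (hinner n k h1 h2)
  have ht0 : Filter.Tendsto t Filter.atTop (nhds 0) := by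
    have h2 : Filter.Tendsto (fun n:ℕ => ((n:ℝ)+2)) Filter.atTop Filter.atTop :=
      Filter.tendsto_atTop_add_const_right _ 2 tendsto_natCast_atTop_atTop
    simpa [ht_def, one_div, Pi.inv_def] using h2.inv_tendsto_atTop
  have hgr : Filter.Tendsto g Filter.atTop (nhds (r : E)) := by
    have : Filter.Tendsto (fun n => (1 - t n) • (r:E) + t n • q0v) Filter.atTop
        (nhds ((1 - (0:ℝ)) • (r:E) + (0:ℝ) • q0v)) :=
      ((tendsto_const_nhds.sub ht0).smul tendsto_const_nhds).add (ht0.smul tendsto_const_nhds)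
    simpa using this
  have hnorm : Filter.Tendsto (fun n => ‖g n‖) Filter.atTop (nhds 1) := by
    have := hgr.norm
    simpa [mem_sphere_zero_iff_norm.mp r.2] using this
  have hinv : Filter.Tendsto (fun n => ‖g n‖⁻¹) Filter.atTop (nhds 1) := by
    have := hnorm.inv₀ one_ne_zero
    simpa using this
  have hfr : Filter.Tendsto f Filter.atTop (nhds (r : E)) := by
    have := hinv.smul hgr
    simpa using this
  have hseqr : Filter.Tendsto seq Filter.atTop (nhds r) := by
    exact tendsto_subtype_rng.mpr hfr
  exact mem_closure_of_tendsto hseqr (Filter.Eventually.of_forall hmem)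

/-- For `p ≥ 3`, the closure of `Δ` in `S³` is
`{r ∈ S³ | ⟪u_k, r⟫ ≥ 0 ∀ k ∈ {1,…,p-1}}` and the frontier of `Δ` in `S³` is
`{r ∈ S³ | ⟪u_k, r⟫ ≥ 0 ∀ k, and ⟪u_k, r⟫ = 0 for some k ∈ {1,…,p-1}}`. -/
theorem stmt5 (p : ℕ) (hp : 3 ≤ p) :
    closure (Delta p) =
      {r : Sph3 | ∀ k : ℕ, 1 ≤ k → k ≤ p - 1 →
        0 ≤ ⟪uvec p k, (r : EuclideanSpace ℝ (Fin 4))⟫} ∧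
    frontier (Delta p) =
      {r : Sph3 | (∀ k : ℕ, 1 ≤ k → k ≤ p - 1 →
          0 ≤ ⟪uvec p k, (r : EuclideanSpace ℝ (Fin 4))⟫) ∧
        ∃ k : ℕ, 1 ≤ k ∧ k ≤ p - 1 ∧ ⟪uvec p k, (r : EuclideanSpace ℝ (Fin 4))⟫ = 0} := by
  have hclo : closure (Delta p) =
      {r : Sph3 | ∀ k : ℕ, 1 ≤ k → k ≤ p - 1 →
        0 ≤ ⟪uvec p k, (r : EuclideanSpace ℝ (Fin 4))⟫} := by
    apply Set.Subset.antisymm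
    · apply closure_minimal _ (isClosed_S p)
      intro r hr k h1 h2
      exact le_of_lt (hr k h1 h2)
    · intro r hr
      exact mem_closure_Delta p hp r hr
  refine ⟨hclo, ?_⟩
  rw [frontier, (isOpen_Delta p).interior_eq, hclo]
  ext r
  simp only [Set.mem_diff, Set.mem_setOf_eq, Delta]
  constructor
  · rintro ⟨h1, h2⟩
    refine ⟨h1, ?_⟩
    push_neg at h2
    obtain ⟨k, hk1, hk2, hk3⟩ := h2
    exact ⟨k, hk1, hk2, le_antisymm hk3 (h1 k hk1 hk2)⟩
  · rintro ⟨h1, k, hk1, hk2, hk3⟩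
    refine ⟨h1, ?_⟩
    intro h
    have := h k hk1 hk2
    rw [hk3] at this
    exact lt_irrefl _ this
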